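/- Let E be a type and α, β : E → ℝ, and suppose there are constants 0 < m ≤ M such that m ≤ α_e ≤ M and |β_e| ≤ M for all e ∈ E. For each e let M_e be the 3×3 complex matrix M_e = [[−β_e, 0, −α_e], [0, α_e, 0], [−α_e, 0, 0]]. Then there exists a continuous linear operator B on the Hilbert space ℓ²(E; ℂ³) (the ℓ²-direct sum lp (fun e => EuclideanSpace ℂ (Fin 3)) 2) such that (Bx)(e) = M_e · x(e) (matrix–vector multiplication) for all x ∈ ℓ²(E; ℂ³) and e ∈ E; moreover B is self-adjoint and bijective. (Consequently ⟨Bx, y⟩ defines a Krein space inner product on ℓ²(E; ℂ³).) -/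

import Mathlib

open Matrix
open scoped ENNReal

section BlockDiag

variable {E : Type*}

local notation "H3" => EuclideanSpace ℂ (Fin 3)

open scoped InnerProductSpace

lemma memℓp_lpBlockDiag (T : E → (H3 →L[ℂ] H3)) {C : ℝ} (hC : 0 ≤ C)
    (hT : ∀ e, ‖T e‖ ≤ C) (x : lp (fun _ : E => H3) 2) :
    Memℓp (fun e => T e ((x : ∀ _ : E, H3) e)) 2 := by
  apply memℓp_gen
  have hx : Summable fun e => ‖(x : ∀ _ : E, H3) e‖ ^ (2 : ℝ≥0∞).toReal :=
    (lp.memℓp x).summable (by norm_num)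
  refine Summable.of_nonneg_of_le (fun e => Real.rpow_nonneg (norm_nonneg _) _)
    (fun e => ?_) (hx.mul_left (C ^ (2 : ℝ≥0∞).toReal))
  calc ‖T e ((x : ∀ _ : E, H3) e)‖ ^ (2 : ℝ≥0∞).toReal
      ≤ (C * ‖(x : ∀ _ : E, H3) e‖) ^ (2 : ℝ≥0∞).toReal := by
        refine Real.rpow_le_rpow (norm_nonneg _) ?_ (by norm_num)
        exact ((T e).le_opNorm _).trans
          (mul_le_mul_of_nonneg_right (hT e) (norm_nonneg _))
    _ = C ^ (2 : ℝ≥0∞).toReal * ‖(x : ∀ _ : E, H3) e‖ ^ (2 : ℝ≥0∞).toReal :=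
        Real.mul_rpow hC (norm_nonneg _)

/-- The block-diagonal operator on `ℓ²(E; ℂ³)` induced by a uniformly bounded family of
operators on `ℂ³`. -/
noncomputable def lpBlockDiag (T : E → (H3 →L[ℂ] H3)) {C : ℝ} (hC : 0 ≤ C)
    (hT : ∀ e, ‖T e‖ ≤ C) :
    lp (fun _ : E => H3) 2 →L[ℂ] lp (fun _ : E => H3) 2 := by
  refine LinearMap.mkContinuous
    { toFun := fun x => (⟨fun e => T e ((x : ∀ _ : E, H3) e),
        memℓp_lpBlockDiag T hC hT x⟩ : lp (fun _ : E => H3) 2)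
      map_add' := ?_
      map_smul' := ?_ } C ?_
  · intro x y
    apply lp.ext
    funext e
    simp [lp.coeFn_add]
    rfl
  · intro c x
    apply lp.ext
    funext e
    simp [lp.coeFn_smul]
  · intro x
    refine lp.norm_le_of_forall_sum_le (by norm_num)
      (mul_nonneg hC (norm_nonneg x)) (fun s => ?_)
    have key : ∀ e, ‖T e ((x : ∀ _ : E, H3) e)‖ ^ (2 : ℝ≥0∞).toReal
        ≤ C ^ (2 : ℝ≥0∞).toReal * ‖(x : ∀ _ : E, H3) e‖ ^ (2 : ℝ≥0∞).toReal := by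
      intro e
      rw [← Real.mul_rpow hC (norm_nonneg _)]
      refine Real.rpow_le_rpow (norm_nonneg _) ?_ (by norm_num)
      exact ((T e).le_opNorm _).trans
        (mul_le_mul_of_nonneg_right (hT e) (norm_nonneg _))
    calc ∑ e ∈ s, ‖T e ((x : ∀ _ : E, H3) e)‖ ^ (2 : ℝ≥0∞).toReal
        ≤ ∑ e ∈ s, C ^ (2 : ℝ≥0∞).toReal * ‖(x : ∀ _ : E, H3) e‖ ^ (2 : ℝ≥0∞).toReal :=
          Finset.sum_le_sum fun e _ => key e
      _ = C ^ (2 : ℝ≥0∞).toReal * ∑ e ∈ s, ‖(x : ∀ _ : E, H3) e‖ ^ (2 : ℝ≥0∞).toReal := by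
          rw [Finset.mul_sum]
      _ ≤ C ^ (2 : ℝ≥0∞).toReal * ‖x‖ ^ (2 : ℝ≥0∞).toReal := by
          refine mul_le_mul_of_nonneg_left ?_ (Real.rpow_nonneg hC _)
          exact lp.sum_rpow_le_norm_rpow (by norm_num) x s
      _ = (C * ‖x‖) ^ (2 : ℝ≥0∞).toReal := (Real.mul_rpow hC (norm_nonneg _)).symm

@[simp] lemma lpBlockDiag_apply (T : E → (H3 →L[ℂ] H3)) {C : ℝ} (hC : 0 ≤ C)
    (hT : ∀ e, ‖T e‖ ≤ C) (x : lp (fun _ : E => H3) 2) (e : E) :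
    (lpBlockDiag T hC hT x : ∀ _ : E, H3) e = T e ((x : ∀ _ : E, H3) e) := rfl

/-- Operator norm bound for `toEuclideanCLM` in terms of an entrywise bound. -/
lemma toEuclideanCLM_norm_le (A : Matrix (Fin 3) (Fin 3) ℂ) {C : ℝ}
    (hC : 0 ≤ C) (hA : ∀ i j, ‖A i j‖ ≤ C) :
    ‖(Matrix.toEuclideanCLM (n := Fin 3) (𝕜 := ℂ) A)‖ ≤ 9 * C := by
  refine ContinuousLinearMap.opNorm_le_bound _ (by positivity) (fun v => ?_)
  have hcoord : ∀ j, ‖(v : Fin 3 → ℂ) j‖ ≤ ‖v‖ := by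
    intro j
    rw [EuclideanSpace.norm_eq]
    calc ‖(v : Fin 3 → ℂ) j‖ = Real.sqrt (‖(v : Fin 3 → ℂ) j‖ ^ 2) :=
          (Real.sqrt_sq (norm_nonneg _)).symm
      _ ≤ _ := Real.sqrt_le_sqrt (Finset.single_le_sum
          (f := fun i => ‖(v : Fin 3 → ℂ) i‖ ^ 2)
          (fun i _ => by positivity) (Finset.mem_univ j))
  have happ : ∀ i, ((Matrix.toEuclideanCLM (n := Fin 3) (𝕜 := ℂ) A) v : Fin 3 → ℂ) i
      = A.mulVec (v : Fin 3 → ℂ) i := fun i => rfl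
  have hentry : ∀ i, ‖((Matrix.toEuclideanCLM (n := Fin 3) (𝕜 := ℂ) A) v : Fin 3 → ℂ) i‖
      ≤ 3 * (C * ‖v‖) := by
    intro i
    rw [happ]
    calc ‖A.mulVec (v : Fin 3 → ℂ) i‖ = ‖∑ j, A i j * (v : Fin 3 → ℂ) j‖ := by
          simp [Matrix.mulVec, dotProduct]
      _ ≤ ∑ j, ‖A i j * (v : Fin 3 → ℂ) j‖ := norm_sum_le _ _
      _ ≤ ∑ _j : Fin 3, C * ‖v‖ := by
          refine Finset.sum_le_sum fun j _ => ?_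
          rw [norm_mul]
          exact mul_le_mul (hA i j) (hcoord j) (norm_nonneg _) hC
      _ = 3 * (C * ‖v‖) := by simp [Finset.sum_const]
  calc ‖(Matrix.toEuclideanCLM (n := Fin 3) (𝕜 := ℂ) A) v‖
      = Real.sqrt (∑ i, ‖((Matrix.toEuclideanCLM (n := Fin 3) (𝕜 := ℂ) A) v : Fin 3 → ℂ) i‖ ^ 2) :=
        EuclideanSpace.norm_eq _
    _ ≤ Real.sqrt (∑ _i : Fin 3, (3 * (C * ‖v‖)) ^ 2) := Real.sqrt_le_sqrt
        (Finset.sum_le_sum fun i _ => pow_le_pow_left₀ (norm_nonneg _) (hentry i) 2)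
    _ ≤ Real.sqrt ((9 * C * ‖v‖) ^ 2) := Real.sqrt_le_sqrt (by
        simp [Finset.sum_const]
        nlinarith [mul_nonneg hC (norm_nonneg v)])
    _ = 9 * C * ‖v‖ := Real.sqrt_sq (by positivity)

end BlockDiag

open scoped InnerProductSpace

/-- The boundary matrices `M_e = [[−β_e, 0, −α_e], [0, α_e, 0], [−α_e, 0, 0]]` of the
linearized KdV operator, with `(α_e)` bounded and bounded away from zero and `(β_e)`
bounded, induce a bounded, self-adjoint, bijective block-diagonal operator `B` on the
Hilbert space `ℓ²(E; ℂ³)`; hence `⟨Bx, y⟩` is a Krein space inner product. -/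
theorem exists_krein_gram_operator
    (E : Type*) (α β : E → ℝ) (m M : ℝ) (hm : 0 < m) (hmM : m ≤ M)
    (hα : ∀ e, m ≤ α e ∧ α e ≤ M) (hβ : ∀ e, |β e| ≤ M)
    (Mat : E → Matrix (Fin 3) (Fin 3) ℂ)
    (hMat : ∀ e, Mat e =
      !![(-(β e) : ℂ), 0, (-(α e) : ℂ); 0, ((α e) : ℂ), 0; (-(α e) : ℂ), 0, 0]) :
    ∃ B : (lp (fun _ : E => EuclideanSpace ℂ (Fin 3)) 2) →L[ℂ]
          (lp (fun _ : E => EuclideanSpace ℂ (Fin 3)) 2),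
      (∀ (x : lp (fun _ : E => EuclideanSpace ℂ (Fin 3)) 2) (e : E),
        (B x : ∀ _ : E, EuclideanSpace ℂ (Fin 3)) e =
          (EuclideanSpace.equiv (Fin 3) ℂ).symm
            ((Mat e).mulVec (EuclideanSpace.equiv (Fin 3) ℂ
              ((x : ∀ _ : E, EuclideanSpace ℂ (Fin 3)) e)))) ∧
      IsSelfAdjoint B ∧ Function.Bijective B := by
  classical
  have hM0 : (0 : ℝ) < M := lt_of_lt_of_le hm hmM
  -- facts about α
  have hαpos : ∀ e, 0 < α e := fun e => lt_of_lt_of_le hm (hα e).1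
  have hαne : ∀ e, (α e : ℂ) ≠ 0 := fun e => by
    exact_mod_cast Complex.ofReal_ne_zero.mpr (ne_of_gt (hαpos e))
  -- the blocks as operators
  set T : E → (EuclideanSpace ℂ (Fin 3) →L[ℂ] EuclideanSpace ℂ (Fin 3)) :=
    fun e => Matrix.toEuclideanCLM (n := Fin 3) (𝕜 := ℂ) (Mat e) with hT_def
  have hMbound : ∀ e (i j : Fin 3), ‖Mat e i j‖ ≤ M := by
    intro e i j
    rw [hMat]
    fin_cases i <;> fin_cases j <;>
      simp [Matrix.vecHead, Matrix.vecTail] <;>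
      first
        | exact le_of_lt hM0
        | exact hβ e
        | (rw [abs_of_pos (hαpos e)]; exact (hα e).2)
  have hTbound : ∀ e, ‖T e‖ ≤ 9 * M :=
    fun e => toEuclideanCLM_norm_le (Mat e) hM0.le (hMbound e)
  -- the operator B
  refine ⟨lpBlockDiag T (by positivity) hTbound, ?_, ?_, ?_⟩
  · intro x e
    rfl
  · -- self-adjointness
    rw [ContinuousLinearMap.isSelfAdjoint_iff_isSymmetric]
    intro x y
    have hsa : ∀ e, IsSelfAdjoint (T e) := by
      intro e
      have hMsa : _root_.IsSelfAdjoint (Mat e) := by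
        show star (Mat e) = Mat e
        rw [Matrix.star_eq_conjTranspose, hMat e]
        ext i j
        fin_cases i <;> fin_cases j <;>
          simp [Matrix.conjTranspose_apply, Matrix.vecHead, Matrix.vecTail, ← Complex.ofReal_neg]
      exact hMsa.map (Matrix.toEuclideanCLM (n := Fin 3) (𝕜 := ℂ))
    have hsym : ∀ e, ((T e : EuclideanSpace ℂ (Fin 3) →ₗ[ℂ]
        EuclideanSpace ℂ (Fin 3))).IsSymmetric :=
      fun e => ContinuousLinearMap.isSelfAdjoint_iff_isSymmetric.mp (hsa e)
    show ⟪lpBlockDiag T _ hTbound x, y⟫_ℂ = ⟪x, lpBlockDiag T _ hTbound y⟫_ℂ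
    rw [lp.inner_eq_tsum, lp.inner_eq_tsum]
    exact tsum_congr fun e => hsym e _ _
  · -- bijectivity: construct the inverse block operator
    set N : E → Matrix (Fin 3) (Fin 3) ℂ := fun e =>
      !![0, 0, (-(α e)⁻¹ : ℂ); 0, ((α e)⁻¹ : ℂ), 0;
         (-(α e)⁻¹ : ℂ), 0, ((β e) / (α e) ^ 2 : ℂ)] with hN_def
    have hinv : ∀ e, Mat e * N e = 1 := by
      intro e
      have hne := hαne e
      rw [hMat]
      ext i j
      fin_cases i <;> fin_cases j <;>
        simp [hN_def, Matrix.mul_apply, Fin.sum_univ_three, Matrix.one_apply,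
          Matrix.vecHead, Matrix.vecTail] <;>
        field_simp <;>
        try ring
    have hinv' : ∀ e, N e * Mat e = 1 := fun e => mul_eq_one_comm.mp (hinv e)
    have hNbound : ∀ e (i j : Fin 3), ‖N e i j‖ ≤ M / m ^ 2 := by
      have h1 : ∀ e, |α e|⁻¹ ≤ M / m ^ 2 := by
        intro e
        rw [abs_of_pos (hαpos e)]
        calc (α e)⁻¹ ≤ m⁻¹ := inv_anti₀ hm (hα e).1
          _ ≤ M / m ^ 2 := by
            rw [inv_eq_one_div, div_le_div_iff₀ hm (by positivity)]
            nlinarith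
      have h2 : ∀ e, |β e| / α e ^ 2 ≤ M / m ^ 2 := by
        intro e
        refine div_le_div₀ (le_of_lt hM0) (hβ e) (by positivity) ?_
        have := (hα e).1
        nlinarith
      intro e i j
      fin_cases i <;> fin_cases j <;>
        simp [hN_def, Matrix.vecHead, Matrix.vecTail] <;>
        first
          | positivity
          | exact h1 e
          | exact h2 e
    set T' : E → (EuclideanSpace ℂ (Fin 3) →L[ℂ] EuclideanSpace ℂ (Fin 3)) :=
      fun e => Matrix.toEuclideanCLM (n := Fin 3) (𝕜 := ℂ) (N e) with hT'_def
    have hT'bound : ∀ e, ‖T' e‖ ≤ 9 * (M / m ^ 2) :=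
      fun e => toEuclideanCLM_norm_le (N e) (by positivity) (hNbound e)
    have hC' : (0:ℝ) ≤ 9 * (M / m ^ 2) := by positivity
    refine Function.bijective_iff_has_inverse.mpr
      ⟨lpBlockDiag T' hC' hT'bound, fun x => ?_, fun x => ?_⟩
    · -- left inverse : B' (B x) = x
      apply lp.ext
      funext e
      show T' e (T e ((x : ∀ _ : E, EuclideanSpace ℂ (Fin 3)) e)) = _
      have : T' e (T e ((x : ∀ _ : E, EuclideanSpace ℂ (Fin 3)) e)) =
          (Matrix.toEuclideanCLM (n := Fin 3) (𝕜 := ℂ) (N e * Mat e))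
            ((x : ∀ _ : E, EuclideanSpace ℂ (Fin 3)) e) := by
        rw [_root_.map_mul]; rfl
      rw [this, hinv' e, _root_.map_one]
      rfl
    · -- right inverse : B (B' x) = x
      apply lp.ext
      funext e
      show T e (T' e ((x : ∀ _ : E, EuclideanSpace ℂ (Fin 3)) e)) = _
      have : T e (T' e ((x : ∀ _ : E, EuclideanSpace ℂ (Fin 3)) e)) =
          (Matrix.toEuclideanCLM (n := Fin 3) (𝕜 := ℂ) (Mat e * N e))
            ((x : ∀ _ : E, EuclideanSpace ℂ (Fin 3)) e) := by
        rw [_root_.map_mul]; rfl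
      rw [this, hinv e, _root_.map_one]
      rfl
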